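/- Let f : ℝ → ℂ be analytic with all derivatives defined, and let a ∈ ℝ. If the Taylor series ∑_{n≥0} (aⁿ/n!)·f^{(n)}(x) converges absolutely for all x (e.g. if ‖f‖(r, 0) < ∞ for some r > |a|), then ∑_{n≥0} (aⁿ/n!)·f^{(n)}(x) = f(x + a) for all x ∈ ℝ. -/

import Mathlib

/-- Taylor shift identity `e^{a·d/dx} f = f(·+a)`: for an analytic function whose Taylor
series converges absolutely everywhere, `∑ₙ (aⁿ/n!) f⁽ⁿ⁾(x) = f(x+a)`. -/
theorem stmt_16 (f : ℝ → ℂ) (hf : AnalyticOn ℝ f Set.univ) (a : ℝ)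
    (hconv : ∃ r : ℝ, |a| < r ∧ ∀ x : ℝ,
      Summable fun n : ℕ => ‖iteratedDeriv n f x‖ * r ^ n / n.factorial) :
    ∀ x : ℝ, ∑' n : ℕ, ((a ^ n / n.factorial : ℝ) : ℂ) * iteratedDeriv n f x = f (x + a) := by
  obtain ⟨r, har, hsum⟩ := hconv
  have hr0 : 0 < r := lt_of_le_of_lt (abs_nonneg a) har
  have hfa : AnalyticOnNhd ℝ f Set.univ := isOpen_univ.analyticOn_iff_analyticOnNhd.mp hf
  intro x
  -- the Taylor series of `f` at `x`
  set p : FormalMultilinearSeries ℝ ℝ ℂ :=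
    fun n => ContinuousMultilinearMap.mkPiRing ℝ (Fin n)
      (((n.factorial : ℝ))⁻¹ • iteratedDeriv n f x) with hp
  have hcoeff : ∀ n, p.coeff n = ((n.factorial : ℝ))⁻¹ • iteratedDeriv n f x := by
    intro n
    simp [FormalMultilinearSeries.coeff, hp]
  have hnorm : ∀ n, ‖p n‖ = ‖iteratedDeriv n f x‖ / n.factorial := by
    intro n
    rw [hp, ContinuousMultilinearMap.norm_mkPiRing, norm_smul]
    rw [norm_inv, Real.norm_natCast]
    rw [inv_mul_eq_div, div_eq_div_iff] <;> positivity
  -- the radius of `p` is at least `r`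
  have hrad : (r.toNNReal : ENNReal) ≤ p.radius := by
    apply p.le_radius_of_summable
    have : (fun n : ℕ => ‖p n‖ * (r.toNNReal : ℝ) ^ n)
        = fun n : ℕ => ‖iteratedDeriv n f x‖ * r ^ n / n.factorial := by
      funext n
      rw [hnorm n, Real.coe_toNNReal _ hr0.le]
      ring
    rw [this]
    exact hsum x
  have hrp : (0 : ENNReal) < p.radius :=
    lt_of_lt_of_le (by exact_mod_cast Real.toNNReal_pos.mpr hr0) hrad
  -- `f` admits `p` as power series at `x`
  obtain ⟨q, hq⟩ := hfa x (Set.mem_univ x)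
  obtain ⟨rq, hq⟩ := hq
  have hpq : p = q := by
    ext n : 1
    have h1 := hq.factorial_smul (1 : ℝ) n
    rw [← iteratedDeriv_eq_iteratedFDeriv] at h1
    have h2 : q.coeff n = q n fun _ => 1 := rfl
    have h3 : p n = ContinuousMultilinearMap.mkPiRing ℝ (Fin n)
        (((n.factorial : ℝ))⁻¹ • iteratedDeriv n f x) := rfl
    rw [h3, ← q.mkPiRing_coeff_eq n]
    congr 1
    rw [h2, ← h1, ← Nat.cast_smul_eq_nsmul ℝ, smul_smul,
      inv_mul_cancel₀ (by exact_mod_cast n.factorial_ne_zero), one_smul]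
  rw [← hpq] at hq
  -- `f` equals `p.sum (· - x)` near `x`
  have hev : f =ᶠ[nhds x] fun y => p.sum (y - x) := by
    filter_upwards [EMetric.ball_mem_nhds x hq.r_pos] with y hy
    have : f (x + (y - x)) = p.sum (y - x) := by
      apply hq.sum
      rw [EMetric.mem_ball, edist_zero_right, ← edist_eq_enorm_sub]
      exact hy
    simpa using this
  -- `p.sum (· - x)` is analytic on the ball of radius `r` around `x`
  have hg : AnalyticOnNhd ℝ (fun y => p.sum (y - x)) (Metric.ball x r) := by
    intro y hy
    have hmem : y - x ∈ EMetric.ball (0 : ℝ) p.radius := by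
      have hlt : (‖y - x‖₊ : ENNReal) < (r.toNNReal : ENNReal) := by
        rw [ENNReal.coe_lt_coe, ← NNReal.coe_lt_coe, coe_nnnorm,
          Real.coe_toNNReal _ hr0.le]
        simpa [Real.dist_eq, abs_sub_comm] using hy
      have : edist (y - x) (0 : ℝ) < (r.toNNReal : ENNReal) := by
        rwa [edist_zero_right]
      exact lt_of_lt_of_le this hrad
    have h1 : AnalyticAt ℝ p.sum (y - x) :=
      (p.hasFPowerSeriesOnBall hrp).analyticOnNhd _ (by change y - x ∈ Metric.eball 0 p.radius at hmem; exact hmem)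
    have h2 : AnalyticAt ℝ (fun y : ℝ => y - x) y := (analyticAt_id).sub analyticAt_const
    exact AnalyticAt.comp (g := p.sum) (f := fun y : ℝ => y - x) h1 h2
  -- identity theorem on the ball
  have heq : Set.EqOn f (fun y => p.sum (y - x)) (Metric.ball x r) :=
    (hfa.mono (Set.subset_univ _)).eqOn_of_preconnected_of_eventuallyEq hg
      (convex_ball x r).isPreconnected (Metric.mem_ball_self hr0) hev
  have hxa : x + a ∈ Metric.ball x r := by
    simp only [Metric.mem_ball, Real.dist_eq, add_sub_cancel_left]
    exact har
  have := heq hxa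
  simp only [add_sub_cancel_left] at this
  rw [this]
  -- compute `p.sum a`
  rw [FormalMultilinearSeries.sum]
  apply tsum_congr
  intro n
  rw [p.apply_eq_pow_smul_coeff, hcoeff n, smul_smul, Complex.real_smul]
  norm_num [div_eq_mul_inv]
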